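/- Let G be a group and N a normal subgroup of G that is abelian (all elements of N commute with each other). Let n ≥ 1 and let u ∈ FreeGroup (Fin n) be an element of the normal closure of the generator x₀ (u ∈ Subgroup.normalClosure {FreeGroup.of 0}). Fix f : Fin n → G and define ψ : G → G by ψ(x) = FreeGroup.lift (Function.update f 0 x) u. Then (1) ψ maps N into N: for every x ∈ N, ψ(x) ∈ N; and (2) the restriction of ψ to N is a group homomorphism: for all x, y ∈ N, ψ(x*y) = ψ(x)*ψ(y). -/

import Mathlib

noncomputable section

/-- If `N` is an abelian normal subgroup of `G` and `u` lies in the normal closure of the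
generator `x₀`, then for any tuple `f` the verbal map `ψ(x) = u(x, f 1, …, f (n-1))` maps
`N` into `N` and restricts to a group homomorphism on `N`. -/
theorem verbal_map_restriction_homomorphism (G : Type*) [Group G] (N : Subgroup G)
    [N.Normal] (hab : ∀ x y : G, x ∈ N → y ∈ N → x * y = y * x)
    (n : ℕ) [NeZero n] (u : FreeGroup (Fin n))
    (hu : u ∈ Subgroup.normalClosure {FreeGroup.of (0 : Fin n)})
    (f : Fin n → G) :
    (∀ x ∈ N, FreeGroup.lift (Function.update f 0 x) u ∈ N) ∧
    (∀ x ∈ N, ∀ y ∈ N,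
      FreeGroup.lift (Function.update f 0 (x * y)) u =
        FreeGroup.lift (Function.update f 0 x) u *
          FreeGroup.lift (Function.update f 0 y) u) := by
  set φ : G → (FreeGroup (Fin n) →* G) := fun x => FreeGroup.lift (Function.update f 0 x)
    with hφ
  -- quotient description of φ
  have hquot : ∀ z : G, (QuotientGroup.mk' N).comp (φ z) =
      FreeGroup.lift (Function.update ((QuotientGroup.mk' N) ∘ f) 0 (QuotientGroup.mk' N z)) := by
    intro z
    apply FreeGroup.ext_hom
    intro i
    simp only [MonoidHom.comp_apply, hφ, FreeGroup.lift_apply_of]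
    rw [← Function.comp_update (QuotientGroup.mk' N) f 0 z]
    rfl
  -- congruence mod N
  have key : ∀ x y : G, x ∈ N → y ∈ N → ∀ w : FreeGroup (Fin n),
      (φ x w)⁻¹ * (φ y w) ∈ N := by
    intro x y hx hy w
    have hx1 : QuotientGroup.mk' N x = 1 := (QuotientGroup.eq_one_iff x).mpr hx
    have hy1 : QuotientGroup.mk' N y = 1 := (QuotientGroup.eq_one_iff y).mpr hy
    have : QuotientGroup.mk' N (φ x w) = QuotientGroup.mk' N (φ y w) := by
      have e1 := congrFun (congrArg DFunLike.coe (hquot x)) w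
      have e2 := congrFun (congrArg DFunLike.coe (hquot y)) w
      simp only [MonoidHom.comp_apply] at e1 e2
      rw [e1, e2, hx1, hy1]
    rwa [QuotientGroup.mk'_apply, QuotientGroup.mk'_apply, QuotientGroup.eq] at this
  have main : ∀ w ∈ Subgroup.normalClosure {FreeGroup.of (0 : Fin n)},
      (∀ x ∈ N, φ x w ∈ N) ∧
      (∀ x ∈ N, ∀ y ∈ N, φ (x * y) w = φ x w * φ y w) := by
    intro w hw
    refine Subgroup.closure_induction ?_ ?_ ?_ ?_ hw
    · -- conjugates of x₀
      rintro c hc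
      rw [Group.mem_conjugatesOfSet_iff] at hc
      obtain ⟨b, hb, hconj⟩ := hc
      rw [Set.mem_singleton_iff] at hb
      subst hb
      rw [isConj_iff] at hconj
      obtain ⟨g, hg⟩ := hconj
      constructor
      · intro x hx
        have : φ x c = φ x g * x * (φ x g)⁻¹ := by
          rw [← hg]
          simp [hφ, FreeGroup.lift_apply_of]
        rw [this]
        exact (by infer_instance : N.Normal).conj_mem x hx (φ x g)
      · intro x hx y hy
        have hcx : ∀ z : G, φ z c = φ z g * z * (φ z g)⁻¹ := by
          intro z
          rw [← hg]
          simp [hφ, FreeGroup.lift_apply_of]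
        set h := φ (x * y) g with hh
        set a := h⁻¹ * φ x g with ha
        set b := h⁻¹ * φ y g with hb2
        have haN : a ∈ N := key (x * y) x (N.mul_mem hx hy) hx g
        have hbN : b ∈ N := key (x * y) y (N.mul_mem hx hy) hy g
        have hxa : φ x g = h * a := by rw [ha]; group
        have hyb : φ y g = h * b := by rw [hb2]; group
        have hax : a * x * a⁻¹ = x := by
          rw [hab a x haN hx]; group
        have hby : b * y * b⁻¹ = y := by
          rw [hab b y hbN hy]; group
        rw [hcx (x * y), hcx x, hcx y, hxa, hyb]
        calc h * (x * y) * h⁻¹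
            = h * (a * x * a⁻¹) * ((b * y * b⁻¹) * h⁻¹) := by rw [hax, hby]; group
          _ = h * a * x * (h * a)⁻¹ * (h * b * y * (h * b)⁻¹) := by group
    · exact ⟨fun x _ => by simp [N.one_mem], fun x _ y _ => by simp⟩
    · rintro v w' - - ⟨hv1, hv2⟩ ⟨hw1, hw2⟩
      constructor
      · intro x hx
        rw [map_mul]
        exact N.mul_mem (hv1 x hx) (hw1 x hx)
      · intro x hx y hy
        rw [map_mul, map_mul, map_mul, hv2 x hx y hy, hw2 x hx y hy]
        have := hab (φ y v) (φ x w') (hv1 y hy) (hw1 x hx)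
        calc φ x v * φ y v * (φ x w' * φ y w')
            = φ x v * (φ y v * φ x w') * φ y w' := by group
          _ = φ x v * (φ x w' * φ y v) * φ y w' := by rw [this]
          _ = φ x v * φ x w' * (φ y v * φ y w') := by group
    · rintro v - ⟨hv1, hv2⟩
      constructor
      · intro x hx
        rw [map_inv]
        exact N.inv_mem (hv1 x hx)
      · intro x hx y hy
        rw [map_inv, map_inv, map_inv, hv2 x hx y hy, mul_inv_rev]
        exact hab _ _ (N.inv_mem (hv1 y hy)) (N.inv_mem (hv1 x hx))
  exact main u hu
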